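/- There exist C > 0 and h₀ > 0 such that for every h ∈ (0,h₀), every E₀ ∈ ℝ with |E₀ − (1+h)| ≤ e^{−1/(10h)}, and every v ∈ C²([3.5, R+1];ℂ) with −h²v'' + (V−E₀)v = 0 on [3.5,R+1], the vector 𝐯(x) = (W(v,v₊)(x), W(v,v₋)(x)) ∈ ℂ² satisfies |𝐯(x) − 𝐯(3.5)| ≤ C h |𝐯(3.5)| for all x ∈ [3.5, R+1]. -/

import Mathlib

open MeasureTheory Set Real

noncomputable section

/-- The phase `Φ(x) = ∫_{4-E₀}^x √(E₀ - V(y)) dy`. -/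
def wkbPhase (V : ℝ → ℝ) (E₀ : ℝ) (x : ℝ) : ℝ :=
  ∫ y in (4 - E₀)..x, Real.sqrt (E₀ - V y)

/-- The WKB solution `v₊(x) = (E₀ - V(x))^{-1/4} e^{iΦ(x)/h}`. -/
def wkbPlus (V : ℝ → ℝ) (h E₀ : ℝ) (x : ℝ) : ℂ :=
  (((E₀ - V x) ^ (-(1 / 4 : ℝ)) : ℝ) : ℂ) * Complex.exp (Complex.I * (wkbPhase V E₀ x) / h)

/-- The WKB solution `v₋(x) = (E₀ - V(x))^{-1/4} e^{-iΦ(x)/h}`. -/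
def wkbMinus (V : ℝ → ℝ) (h E₀ : ℝ) (x : ℝ) : ℂ :=
  (((E₀ - V x) ^ (-(1 / 4 : ℝ)) : ℝ) : ℂ) * Complex.exp (-Complex.I * (wkbPhase V E₀ x) / h)

/-- The semiclassical Wronskian `W(v, v₊)(x)` of a function `v` (with derivative `v'`)
against the WKB solution `v₊`. -/
def wrPlus (V : ℝ → ℝ) (h E₀ : ℝ) (v v' : ℝ → ℂ) (x : ℝ) : ℂ :=
  v x * ((h : ℂ) * deriv (wkbPlus V h E₀) x) - wkbPlus V h E₀ x * ((h : ℂ) * v' x)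

/-- The semiclassical Wronskian `W(v, v₋)(x)` of a function `v` (with derivative `v'`)
against the WKB solution `v₋`. -/
def wrMinus (V : ℝ → ℝ) (h E₀ : ℝ) (v v' : ℝ → ℂ) (x : ℝ) : ℂ :=
  v x * ((h : ℂ) * deriv (wkbMinus V h E₀) x) - wkbMinus V h E₀ x * ((h : ℂ) * v' x)

namespace WKBAux

variable (V : ℝ → ℝ) (h E₀ : ℝ)

def aF (x : ℝ) : ℝ := (E₀ - V x) ^ (-(1 / 4 : ℝ))
def qF (x : ℝ) : ℝ := (E₀ - V x) ^ ((1 / 4 : ℝ))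
def a1F (x : ℝ) : ℝ := (1 / 4) * deriv V x * (E₀ - V x) ^ (-(5 / 4 : ℝ))
def q1F (x : ℝ) : ℝ := -((1 / 4) * deriv V x * (E₀ - V x) ^ (-(3 / 4 : ℝ)))
def a2F (x : ℝ) : ℝ := (1 / 4) * (deriv (deriv V) x * (E₀ - V x) ^ (-(5 / 4 : ℝ))
  + deriv V x * ((5 / 4) * deriv V x * (E₀ - V x) ^ (-(9 / 4 : ℝ))))
def eP (x : ℝ) : ℂ := Complex.exp (Complex.I * (wkbPhase V E₀ x) / h)
def eM (x : ℝ) : ℂ := Complex.exp (-Complex.I * (wkbPhase V E₀ x) / h)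
def w1P (x : ℝ) : ℂ :=
  (((a1F V E₀ x : ℝ) : ℂ) + Complex.I / h * ((qF V E₀ x : ℝ) : ℂ)) * eP V h E₀ x
def w1M (x : ℝ) : ℂ :=
  (((a1F V E₀ x : ℝ) : ℂ) - Complex.I / h * ((qF V E₀ x : ℝ) : ℂ)) * eM V h E₀ x
def w2P (x : ℝ) : ℂ :=
  (((a2F V E₀ x : ℝ) : ℂ) + Complex.I / h * ((q1F V E₀ x : ℝ) : ℂ)
    + Complex.I * (Real.sqrt (E₀ - V x)) / h
      * (((a1F V E₀ x : ℝ) : ℂ) + Complex.I / h * ((qF V E₀ x : ℝ) : ℂ))) * eP V h E₀ x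
def w2M (x : ℝ) : ℂ :=
  (((a2F V E₀ x : ℝ) : ℂ) - Complex.I / h * ((q1F V E₀ x : ℝ) : ℂ)
    - Complex.I * (Real.sqrt (E₀ - V x)) / h
      * (((a1F V E₀ x : ℝ) : ℂ) - Complex.I / h * ((qF V E₀ x : ℝ) : ℂ))) * eM V h E₀ x

variable {V h E₀}

section Derivs

variable {x : ℝ}

lemma hasDerivAt_phase (hVc : Continuous V) (x : ℝ) :
    HasDerivAt (wkbPhase V E₀) (Real.sqrt (E₀ - V x)) x :=
  ((continuous_const.sub hVc).sqrt.integral_hasStrictDerivAt (4 - E₀) x).hasDerivAt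

lemma hasDerivAt_eP (hVc : Continuous V) (x : ℝ) :
    HasDerivAt (eP V h E₀)
      (Complex.I * (Real.sqrt (E₀ - V x)) / h * eP V h E₀ x) x := by
  have h1 : HasDerivAt (fun y => ((wkbPhase V E₀ y : ℝ) : ℂ))
      ((Real.sqrt (E₀ - V x) : ℝ) : ℂ) x := (hasDerivAt_phase hVc x).ofReal_comp
  have h2 : HasDerivAt (fun y => Complex.I * ((wkbPhase V E₀ y : ℝ) : ℂ) / h)
      (Complex.I * (Real.sqrt (E₀ - V x)) / h) x := (h1.const_mul Complex.I).div_const h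
  have h3 := h2.cexp
  rw [show (fun y => Complex.exp (Complex.I * ((wkbPhase V E₀ y : ℝ) : ℂ) / h)) = eP V h E₀
    from rfl] at h3
  simpa [eP, mul_comm] using h3

lemma hasDerivAt_eM (hVc : Continuous V) (x : ℝ) :
    HasDerivAt (eM V h E₀)
      (-Complex.I * (Real.sqrt (E₀ - V x)) / h * eM V h E₀ x) x := by
  have h1 : HasDerivAt (fun y => ((wkbPhase V E₀ y : ℝ) : ℂ))
      ((Real.sqrt (E₀ - V x) : ℝ) : ℂ) x := (hasDerivAt_phase hVc x).ofReal_comp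
  have h2 : HasDerivAt (fun y => -Complex.I * ((wkbPhase V E₀ y : ℝ) : ℂ) / h)
      (-Complex.I * (Real.sqrt (E₀ - V x)) / h) x := (h1.const_mul (-Complex.I)).div_const h
  have h3 := h2.cexp
  rw [show (fun y => Complex.exp (-Complex.I * ((wkbPhase V E₀ y : ℝ) : ℂ) / h)) = eM V h E₀
    from rfl] at h3
  simpa [eM, mul_comm] using h3

lemma hasDerivAt_aF (hd : HasDerivAt V (deriv V x) x) (hp : 0 < E₀ - V x) :
    HasDerivAt (aF V E₀) (a1F V E₀ x) x := by
  have h1 : HasDerivAt (fun y => E₀ - V y) (-(deriv V x)) x := hd.const_sub E₀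
  have h2 := h1.rpow_const (p := -(1 / 4 : ℝ)) (Or.inl hp.ne')
  have h3 : (E₀ - V x) ^ (-(1 / 4 : ℝ) - 1) = (E₀ - V x) ^ (-(5 / 4 : ℝ)) := by norm_num
  refine h2.congr_deriv ?_
  rw [a1F, h3.symm]; ring

lemma hasDerivAt_qF (hd : HasDerivAt V (deriv V x) x) (hp : 0 < E₀ - V x) :
    HasDerivAt (qF V E₀) (q1F V E₀ x) x := by
  have h1 : HasDerivAt (fun y => E₀ - V y) (-(deriv V x)) x := hd.const_sub E₀
  have h2 := h1.rpow_const (p := (1 / 4 : ℝ)) (Or.inl hp.ne')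
  have h3 : (E₀ - V x) ^ ((1 / 4 : ℝ) - 1) = (E₀ - V x) ^ (-(3 / 4 : ℝ)) := by norm_num
  refine h2.congr_deriv ?_
  rw [q1F, h3.symm]; ring

lemma hasDerivAt_a1F (hd : HasDerivAt V (deriv V x) x)
    (hd2 : HasDerivAt (deriv V) (deriv (deriv V) x) x) (hp : 0 < E₀ - V x) :
    HasDerivAt (a1F V E₀) (a2F V E₀ x) x := by
  have h1 : HasDerivAt (fun y => E₀ - V y) (-(deriv V x)) x := hd.const_sub E₀
  have h2 := h1.rpow_const (p := -(5 / 4 : ℝ)) (Or.inl hp.ne')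
  have h4 : HasDerivAt (fun y => (1 / 4 : ℝ) * deriv V y)
      ((1 / 4 : ℝ) * deriv (deriv V) x) x := hd2.const_mul _
  have h5 := h4.mul h2
  have h3 : (E₀ - V x) ^ (-(5 / 4 : ℝ) - 1) = (E₀ - V x) ^ (-(9 / 4 : ℝ)) := by norm_num
  refine h5.congr_deriv ?_
  rw [a2F, h3.symm]; ring

lemma id_q1_sq_a1 (hp : 0 < E₀ - V x) :
    q1F V E₀ x + Real.sqrt (E₀ - V x) * a1F V E₀ x = 0 := by
  rw [q1F, a1F, Real.sqrt_eq_rpow]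
  have : (E₀ - V x) ^ (1 / (2 : ℝ)) * (E₀ - V x) ^ (-(5 / 4 : ℝ))
      = (E₀ - V x) ^ (-(3 / 4 : ℝ)) := by
    rw [← Real.rpow_add hp]; norm_num
  linear_combination (1 / 4 * deriv V x) * this

lemma id_sq_q (hp : 0 < E₀ - V x) :
    Real.sqrt (E₀ - V x) * qF V E₀ x = (E₀ - V x) * aF V E₀ x := by
  rw [qF, aF, Real.sqrt_eq_rpow, ← Real.rpow_add hp, ← Real.rpow_one_add' (by positivity) ?_]
  · norm_num
  · norm_num

lemma id_a_q (hp : 0 < E₀ - V x) : aF V E₀ x * qF V E₀ x = 1 := by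
  rw [qF, aF, ← Real.rpow_add hp]; norm_num

lemma aF_pos (hp : 0 < E₀ - V x) : 0 < aF V E₀ x := Real.rpow_pos_of_pos hp _

lemma norm_eP : ‖eP V h E₀ x‖ = 1 := by
  have : Complex.I * ((wkbPhase V E₀ x : ℝ) : ℂ) / h
      = ((wkbPhase V E₀ x / h : ℝ) : ℂ) * Complex.I := by push_cast; ring
  rw [eP, this]
  exact Complex.norm_exp_ofReal_mul_I _

lemma norm_eM : ‖eM V h E₀ x‖ = 1 := by
  have : -Complex.I * ((wkbPhase V E₀ x : ℝ) : ℂ) / h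
      = ((-(wkbPhase V E₀ x / h) : ℝ) : ℂ) * Complex.I := by push_cast; ring
  rw [eM, this]
  exact Complex.norm_exp_ofReal_mul_I _

lemma eP_mul_eM : eP V h E₀ x * eM V h E₀ x = 1 := by
  rw [eP, eM, ← Complex.exp_add, show Complex.I * ((wkbPhase V E₀ x : ℝ) : ℂ) / h
    + -Complex.I * ((wkbPhase V E₀ x : ℝ) : ℂ) / h = 0 by ring, Complex.exp_zero]

lemma wkbPlus_eq : wkbPlus V h E₀ x = ((aF V E₀ x : ℝ) : ℂ) * eP V h E₀ x := rfl

lemma wkbMinus_eq : wkbMinus V h E₀ x = ((aF V E₀ x : ℝ) : ℂ) * eM V h E₀ x := rfl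

lemma norm_wkbPlus (hp : 0 < E₀ - V x) : ‖wkbPlus V h E₀ x‖ = aF V E₀ x := by
  rw [wkbPlus_eq, norm_mul, norm_eP, Complex.norm_real, mul_one,
    Real.norm_eq_abs, abs_of_pos (aF_pos hp)]

lemma norm_wkbMinus (hp : 0 < E₀ - V x) : ‖wkbMinus V h E₀ x‖ = aF V E₀ x := by
  rw [wkbMinus_eq, norm_mul, norm_eM, Complex.norm_real, mul_one,
    Real.norm_eq_abs, abs_of_pos (aF_pos hp)]

lemma hasDerivAt_wkbPlus (hVc : Continuous V) (hd : HasDerivAt V (deriv V x) x)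
    (hp : 0 < E₀ - V x) :
    HasDerivAt (wkbPlus V h E₀) (w1P V h E₀ x) x := by
  have ha := (hasDerivAt_aF hd hp).ofReal_comp
  have he := hasDerivAt_eP (h := h) (E₀ := E₀) hVc x
  have hmul := ha.mul he
  have hfun : ((fun y => ((aF V E₀ y : ℝ) : ℂ)) * eP V h E₀) = wkbPlus V h E₀ := rfl
  rw [hfun] at hmul
  refine hmul.congr_deriv ?_; symm
  rw [w1P]
  have hid : ((Real.sqrt (E₀ - V x) * aF V E₀ x : ℝ) : ℂ) = ((qF V E₀ x : ℝ) : ℂ) := by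
    norm_cast
    rw [aF, qF, Real.sqrt_eq_rpow, ← Real.rpow_add hp]; norm_num
  push_cast at hid ⊢
  linear_combination (-(Complex.I / h) * eP V h E₀ x) * hid

lemma hasDerivAt_wkbMinus (hVc : Continuous V) (hd : HasDerivAt V (deriv V x) x)
    (hp : 0 < E₀ - V x) :
    HasDerivAt (wkbMinus V h E₀) (w1M V h E₀ x) x := by
  have ha := (hasDerivAt_aF hd hp).ofReal_comp
  have he := hasDerivAt_eM (h := h) (E₀ := E₀) hVc x
  have hmul := ha.mul he
  have hfun : ((fun y => ((aF V E₀ y : ℝ) : ℂ)) * eM V h E₀) = wkbMinus V h E₀ := rfl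
  rw [hfun] at hmul
  refine hmul.congr_deriv ?_; symm
  rw [w1M]
  have hid : ((Real.sqrt (E₀ - V x) * aF V E₀ x : ℝ) : ℂ) = ((qF V E₀ x : ℝ) : ℂ) := by
    norm_cast
    rw [aF, qF, Real.sqrt_eq_rpow, ← Real.rpow_add hp]; norm_num
  push_cast at hid ⊢
  linear_combination (Complex.I / h * eM V h E₀ x) * hid

lemma hasDerivAt_w1P (hVc : Continuous V) (hd : HasDerivAt V (deriv V x) x)
    (hd2 : HasDerivAt (deriv V) (deriv (deriv V) x) x) (hp : 0 < E₀ - V x) :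
    HasDerivAt (w1P V h E₀) (w2P V h E₀ x) x := by
  have hb : HasDerivAt (fun y => ((a1F V E₀ y : ℝ) : ℂ) + Complex.I / h * ((qF V E₀ y : ℝ) : ℂ))
      (((a2F V E₀ x : ℝ) : ℂ) + Complex.I / h * ((q1F V E₀ x : ℝ) : ℂ)) x :=
    ((hasDerivAt_a1F hd hd2 hp).ofReal_comp).add
      (((hasDerivAt_qF hd hp).ofReal_comp).const_mul (Complex.I / h))
  have hmul := hb.mul (hasDerivAt_eP (h := h) (E₀ := E₀) hVc x)
  have hfun : ((fun y => ((a1F V E₀ y : ℝ) : ℂ) + Complex.I / h * ((qF V E₀ y : ℝ) : ℂ))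
      * eP V h E₀) = w1P V h E₀ := rfl
  rw [hfun] at hmul
  refine hmul.congr_deriv ?_; symm
  rw [w2P]; ring

lemma hasDerivAt_w1M (hVc : Continuous V) (hd : HasDerivAt V (deriv V x) x)
    (hd2 : HasDerivAt (deriv V) (deriv (deriv V) x) x) (hp : 0 < E₀ - V x) :
    HasDerivAt (w1M V h E₀) (w2M V h E₀ x) x := by
  have hb : HasDerivAt (fun y => ((a1F V E₀ y : ℝ) : ℂ) - Complex.I / h * ((qF V E₀ y : ℝ) : ℂ))
      (((a2F V E₀ x : ℝ) : ℂ) - Complex.I / h * ((q1F V E₀ x : ℝ) : ℂ)) x :=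
    ((hasDerivAt_a1F hd hd2 hp).ofReal_comp).sub
      (((hasDerivAt_qF hd hp).ofReal_comp).const_mul (Complex.I / h))
  have hmul := hb.mul (hasDerivAt_eM (h := h) (E₀ := E₀) hVc x)
  have hfun : ((fun y => ((a1F V E₀ y : ℝ) : ℂ) - Complex.I / h * ((qF V E₀ y : ℝ) : ℂ))
      * eM V h E₀) = w1M V h E₀ := rfl
  rw [hfun] at hmul
  refine hmul.congr_deriv ?_; symm
  rw [w2M]; ring

lemma deriv_wkbPlus_eq (hVc : Continuous V) (hd : HasDerivAt V (deriv V x) x)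
    (hp : 0 < E₀ - V x) : deriv (wkbPlus V h E₀) x = w1P V h E₀ x :=
  (hasDerivAt_wkbPlus hVc hd hp).deriv

lemma deriv_wkbMinus_eq (hVc : Continuous V) (hd : HasDerivAt V (deriv V x) x)
    (hp : 0 < E₀ - V x) : deriv (wkbMinus V h E₀) x = w1M V h E₀ x :=
  (hasDerivAt_wkbMinus hVc hd hp).deriv

lemma wrPlus_eq (hVc : Continuous V) (hd : HasDerivAt V (deriv V x) x)
    (hp : 0 < E₀ - V x) (v v' : ℝ → ℂ) :
    wrPlus V h E₀ v v' x
      = v x * ((h : ℂ) * w1P V h E₀ x) - wkbPlus V h E₀ x * ((h : ℂ) * v' x) := by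
  rw [wrPlus, deriv_wkbPlus_eq hVc hd hp]

lemma wrMinus_eq (hVc : Continuous V) (hd : HasDerivAt V (deriv V x) x)
    (hp : 0 < E₀ - V x) (v v' : ℝ → ℂ) :
    wrMinus V h E₀ v v' x
      = v x * ((h : ℂ) * w1M V h E₀ x) - wkbMinus V h E₀ x * ((h : ℂ) * v' x) := by
  rw [wrMinus, deriv_wkbMinus_eq hVc hd hp]

/-- The key identity `2i v = W₊ v₋ - W₋ v₊`. -/
lemma two_I_v (hVc : Continuous V) (hd : HasDerivAt V (deriv V x) x)
    (hp : 0 < E₀ - V x) (hh : (h : ℂ) ≠ 0) (v v' : ℝ → ℂ) :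
    (2 * Complex.I) * v x
      = wrPlus V h E₀ v v' x * wkbMinus V h E₀ x
        - wrMinus V h E₀ v v' x * wkbPlus V h E₀ x := by
  rw [wrPlus_eq hVc hd hp, wrMinus_eq hVc hd hp, wkbPlus_eq, wkbMinus_eq, w1P, w1M]
  have h1 : eP V h E₀ x * eM V h E₀ x = 1 := eP_mul_eM
  have h2 : ((aF V E₀ x : ℝ) : ℂ) * ((qF V E₀ x : ℝ) : ℂ) = 1 := by
    rw [← Complex.ofReal_mul, id_a_q hp, Complex.ofReal_one]
  have hc : (h : ℂ) * (Complex.I / h) = Complex.I := by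
    field_simp
  linear_combination
    (-(2 * v x * ((h:ℂ) * (Complex.I / h)) * ((qF V E₀ x : ℝ) : ℂ) * ((aF V E₀ x : ℝ) : ℂ))) * h1
    + (-(2 * v x * ((qF V E₀ x : ℝ) : ℂ) * ((aF V E₀ x : ℝ) : ℂ))) * hc
    + (-(2 * Complex.I * v x)) * h2

lemma hasDerivAt_wrPlus (hVc : Continuous V) (hd : ∀ y, HasDerivAt V (deriv V y) y)
    (hd2 : HasDerivAt (deriv V) (deriv (deriv V) x) x)
    (hnb : ∀ᶠ y in nhds x, 0 < E₀ - V y) (hh : (h : ℂ) ≠ 0)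
    {v v' v'' : ℝ → ℂ} (hv : HasDerivAt v (v' x) x) (hv' : HasDerivAt v' (v'' x) x)
    (hode : -(h : ℂ) ^ 2 * v'' x + ((V x - E₀ : ℝ) : ℂ) * v x = 0) :
    HasDerivAt (wrPlus V h E₀ v v')
      ((h : ℂ) * v x * ((a2F V E₀ x : ℝ) : ℂ) * eP V h E₀ x) x := by
  have hpx : 0 < E₀ - V x := hnb.self_of_nhds
  have hEq : (fun y => v y * ((h : ℂ) * w1P V h E₀ y) - wkbPlus V h E₀ y * ((h : ℂ) * v' y))
      =ᶠ[nhds x] wrPlus V h E₀ v v' := by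
    filter_upwards [hnb] with y hy
    rw [wrPlus, deriv_wkbPlus_eq hVc (hd y) hy]
  refine HasDerivAt.congr_of_eventuallyEq ?_ hEq.symm
  have hF : HasDerivAt
      (fun y => v y * ((h : ℂ) * w1P V h E₀ y) - wkbPlus V h E₀ y * ((h : ℂ) * v' y))
      (v' x * ((h : ℂ) * w1P V h E₀ x) + v x * ((h : ℂ) * w2P V h E₀ x)
        - (w1P V h E₀ x * ((h : ℂ) * v' x) + wkbPlus V h E₀ x * ((h : ℂ) * v'' x))) x :=
    (hv.mul ((hasDerivAt_w1P hVc (hd x) hd2 hpx).const_mul _)).sub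
      ((hasDerivAt_wkbPlus hVc (hd x) hpx).mul (hv'.const_mul _))
  refine hF.congr_deriv ?_; symm
  rw [w1P, w2P, wkbPlus_eq]
  have hq1 : ((q1F V E₀ x : ℝ) : ℂ)
      = -(((Real.sqrt (E₀ - V x) : ℝ) : ℂ) * ((a1F V E₀ x : ℝ) : ℂ)) := by
    rw [← Complex.ofReal_mul, ← Complex.ofReal_neg]
    norm_cast
    linarith [id_q1_sq_a1 (V := V) (E₀ := E₀) (x := x) hpx]
  have hsq : ((Real.sqrt (E₀ - V x) : ℝ) : ℂ) * ((qF V E₀ x : ℝ) : ℂ)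
      = ((E₀ - V x : ℝ) : ℂ) * ((aF V E₀ x : ℝ) : ℂ) := by
    rw [← Complex.ofReal_mul, ← Complex.ofReal_mul]
    exact_mod_cast congrArg Complex.ofReal (id_sq_q (V := V) (E₀ := E₀) (x := x) hpx)
  have hinv : (h : ℂ) * (h : ℂ)⁻¹ = 1 := mul_inv_cancel₀ hh
  have hVE : ((V x - E₀ : ℝ) : ℂ) = -(((E₀ - V x : ℝ) : ℂ)) := by push_cast; ring
  rw [hVE] at hode
  linear_combination
    (-(v x * (h:ℂ) * Complex.I * ((h:ℂ))⁻¹ * eP V h E₀ x)) * hq1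
    + (v x * (h:ℂ) * ((h:ℂ))⁻¹ ^ 2 * eP V h E₀ x) * hsq
    + (-(((aF V E₀ x : ℝ) : ℂ) * eP V h E₀ x * ((h:ℂ))⁻¹ ^ 2 * (h:ℂ))) * hode
    + (-(((aF V E₀ x : ℝ) : ℂ) * eP V h E₀ x * (h:ℂ) * v'' x * (((h:ℂ))⁻¹ * (h:ℂ) + 1))) * hinv
    + (-((h:ℂ) * v x * eP V h E₀ x * ((h:ℂ))⁻¹ ^ 2 * ((Real.sqrt (E₀ - V x) : ℝ) : ℂ)
        * ((qF V E₀ x : ℝ) : ℂ))) * Complex.I_sq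

lemma hasDerivAt_wrMinus (hVc : Continuous V) (hd : ∀ y, HasDerivAt V (deriv V y) y)
    (hd2 : HasDerivAt (deriv V) (deriv (deriv V) x) x)
    (hnb : ∀ᶠ y in nhds x, 0 < E₀ - V y) (hh : (h : ℂ) ≠ 0)
    {v v' v'' : ℝ → ℂ} (hv : HasDerivAt v (v' x) x) (hv' : HasDerivAt v' (v'' x) x)
    (hode : -(h : ℂ) ^ 2 * v'' x + ((V x - E₀ : ℝ) : ℂ) * v x = 0) :
    HasDerivAt (wrMinus V h E₀ v v')
      ((h : ℂ) * v x * ((a2F V E₀ x : ℝ) : ℂ) * eM V h E₀ x) x := by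
  have hpx : 0 < E₀ - V x := hnb.self_of_nhds
  have hEq : (fun y => v y * ((h : ℂ) * w1M V h E₀ y) - wkbMinus V h E₀ y * ((h : ℂ) * v' y))
      =ᶠ[nhds x] wrMinus V h E₀ v v' := by
    filter_upwards [hnb] with y hy
    rw [wrMinus, deriv_wkbMinus_eq hVc (hd y) hy]
  refine HasDerivAt.congr_of_eventuallyEq ?_ hEq.symm
  have hF : HasDerivAt
      (fun y => v y * ((h : ℂ) * w1M V h E₀ y) - wkbMinus V h E₀ y * ((h : ℂ) * v' y))
      (v' x * ((h : ℂ) * w1M V h E₀ x) + v x * ((h : ℂ) * w2M V h E₀ x)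
        - (w1M V h E₀ x * ((h : ℂ) * v' x) + wkbMinus V h E₀ x * ((h : ℂ) * v'' x))) x :=
    (hv.mul ((hasDerivAt_w1M hVc (hd x) hd2 hpx).const_mul _)).sub
      ((hasDerivAt_wkbMinus hVc (hd x) hpx).mul (hv'.const_mul _))
  refine hF.congr_deriv ?_; symm
  rw [w1M, w2M, wkbMinus_eq]
  have hq1 : ((q1F V E₀ x : ℝ) : ℂ)
      = -(((Real.sqrt (E₀ - V x) : ℝ) : ℂ) * ((a1F V E₀ x : ℝ) : ℂ)) := by
    rw [← Complex.ofReal_mul, ← Complex.ofReal_neg]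
    norm_cast
    linarith [id_q1_sq_a1 (V := V) (E₀ := E₀) (x := x) hpx]
  have hsq : ((Real.sqrt (E₀ - V x) : ℝ) : ℂ) * ((qF V E₀ x : ℝ) : ℂ)
      = ((E₀ - V x : ℝ) : ℂ) * ((aF V E₀ x : ℝ) : ℂ) := by
    rw [← Complex.ofReal_mul, ← Complex.ofReal_mul]
    exact_mod_cast congrArg Complex.ofReal (id_sq_q (V := V) (E₀ := E₀) (x := x) hpx)
  have hinv : (h : ℂ) * (h : ℂ)⁻¹ = 1 := mul_inv_cancel₀ hh
  have hVE : ((V x - E₀ : ℝ) : ℂ) = -(((E₀ - V x : ℝ) : ℂ)) := by push_cast; ring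
  rw [hVE] at hode
  linear_combination
    (v x * (h:ℂ) * Complex.I * ((h:ℂ))⁻¹ * eM V h E₀ x) * hq1
    + (v x * (h:ℂ) * ((h:ℂ))⁻¹ ^ 2 * eM V h E₀ x) * hsq
    + (-(((aF V E₀ x : ℝ) : ℂ) * eM V h E₀ x * ((h:ℂ))⁻¹ ^ 2 * (h:ℂ))) * hode
    + (-(((aF V E₀ x : ℝ) : ℂ) * eM V h E₀ x * (h:ℂ) * v'' x * (((h:ℂ))⁻¹ * (h:ℂ) + 1))) * hinv
    + (-((h:ℂ) * v x * eM V h E₀ x * ((h:ℂ))⁻¹ ^ 2 * ((Real.sqrt (E₀ - V x) : ℝ) : ℂ)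
        * ((qF V E₀ x : ℝ) : ℂ))) * Complex.I_sq

end Derivs

end WKBAux

set_option maxHeartbeats 2000000 in
open WKBAux in
/-- For any solution `v` of `(P - E₀) v = 0` on `[3.5, R+1]`, the vector of
Wronskians `𝐯(x) = (W(v,v₊)(x), W(v,v₋)(x))` satisfies `𝐯(x) = 𝐯(3.5)(1 + O(h))`. -/
theorem wronskian_vector_almost_constant
    (V : ℝ → ℝ)
    (hV_smooth : ContDiff ℝ (⊤ : ℕ∞) V) (hV_comp : HasCompactSupport V)
    (hV_nonneg : ∀ x, 0 ≤ V x) (hV_even : ∀ x, V (-x) = V x)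
    (hV_inner : ∀ x ∈ Set.Icc (-1 : ℝ) 1, V x = x ^ 2 + 1)
    (hV_slope : ∀ x ∈ Set.Icc (2 : ℝ) 3.5, V x = 4 - x)
    (hV_lt : ∀ x : ℝ, 3 < x → V x < 1)
    (hV_supp : tsupport V ⊆ Set.Icc (-5 : ℝ) 5)
    (R : ℝ) (hR : 5 < R) :
    ∃ C > (0 : ℝ), ∃ h₀ > (0 : ℝ), ∀ h : ℝ, 0 < h → h < h₀ →
      ∀ E₀ : ℝ, |E₀ - (1 + h)| ≤ Real.exp (-1 / (10 * h)) →
      ∀ v v' v'' : ℝ → ℂ,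
        (∀ x ∈ Set.Icc (3.5 : ℝ) (R + 1), HasDerivAt v (v' x) x) →
        (∀ x ∈ Set.Icc (3.5 : ℝ) (R + 1), HasDerivAt v' (v'' x) x) →
        (∀ x ∈ Set.Icc (3.5 : ℝ) (R + 1),
          -(h : ℂ) ^ 2 * v'' x + ((V x - E₀ : ℝ) : ℂ) * v x = 0) →
        ∀ x ∈ Set.Icc (3.5 : ℝ) (R + 1),
          Real.sqrt (‖wrPlus V h E₀ v v' x - wrPlus V h E₀ v v' 3.5‖ ^ 2
              + ‖wrMinus V h E₀ v v' x - wrMinus V h E₀ v v' 3.5‖ ^ 2)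
            ≤ C * h * Real.sqrt (‖wrPlus V h E₀ v v' 3.5‖ ^ 2
              + ‖wrMinus V h E₀ v v' 3.5‖ ^ 2) := by
  classical
  have hVc : Continuous V := hV_smooth.continuous
  have hVd : Differentiable ℝ V := hV_smooth.differentiable (by simp)
  have hd : ∀ y, HasDerivAt V (deriv V y) y := fun y => (hVd y).hasDerivAt
  have hV1 : ContDiff ℝ (⊤ : ℕ∞) (deriv V) := (contDiff_infty_iff_deriv.mp hV_smooth).2
  have hVd2 : Differentiable ℝ (deriv V) := hV1.differentiable (by simp)
  have hd2 : ∀ y, HasDerivAt (deriv V) (deriv (deriv V) y) y := fun y => (hVd2 y).hasDerivAt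
  have hV2c : Continuous (deriv (deriv V)) :=
    ((contDiff_infty_iff_deriv.mp hV1).2).continuous
  -- the compact set S and the max of V on it
  set S : Set ℝ := Set.Icc (3.1 : ℝ) (R + 2) with hS_def
  have hScomp : IsCompact S := isCompact_Icc
  have hSne : S.Nonempty := Set.nonempty_Icc.mpr (by norm_num; linarith)
  obtain ⟨x₀, hx₀S, hx₀max⟩ := hScomp.exists_isMaxOn hSne hVc.continuousOn
  set m : ℝ := V x₀ with hm_def
  have hm1 : m < 1 := hV_lt x₀ (by have := hx₀S.1; norm_num at this; linarith)
  have hm0 : 0 ≤ m := hV_nonneg x₀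
  set δ : ℝ := (1 - m) / 2 with hδ_def
  have hδ : 0 < δ := by simp only [hδ_def]; linarith
  -- bounds on the derivatives of V on S
  obtain ⟨C₁, hC₁⟩ := hScomp.exists_bound_of_continuousOn (hVd2.continuous.continuousOn
    (s := S))
  obtain ⟨C₂, hC₂⟩ := hScomp.exists_bound_of_continuousOn (hV2c.continuousOn (s := S))
  have hC₁0 : 0 ≤ C₁ := le_trans (norm_nonneg _) (hC₁ 3.1 ⟨le_refl _, by linarith⟩)
  have hC₂0 : 0 ≤ C₂ := le_trans (norm_nonneg _) (hC₂ 3.1 ⟨le_refl _, by linarith⟩)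
  set A2 : ℝ := (1 / 4) * (C₂ * δ ^ (-(5 / 4) : ℝ) + (5 / 4) * C₁ ^ 2 * δ ^ (-(9 / 4) : ℝ))
    with hA2_def
  have hA2 : 0 ≤ A2 := by positivity
  set K : ℝ := δ ^ (-(1 / 4) : ℝ) * (A2 + 1) with hK_def
  have hK : 0 < K := by positivity
  set L : ℝ := R + 1 - 3.5 with hL_def
  have hL : 0 < L := by simp only [hL_def]; linarith
  refine ⟨Real.sqrt 2 * (K * L * Real.exp (K * L)), by positivity,
    min 1 (δ / 22), lt_min one_pos (by positivity), ?_⟩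
  intro h hh0 hh1 E₀ hE v v' v'' hv hv' hode x hx
  have hhne : (h : ℂ) ≠ 0 := Complex.ofReal_ne_zero.mpr hh0.ne'
  have hh1' : h ≤ 1 := le_of_lt (lt_of_lt_of_le hh1 (min_le_left _ _))
  have hh2' : h ≤ δ / 22 := le_of_lt (lt_of_lt_of_le hh1 (min_le_right _ _))
  -- |E₀ - 1| ≤ δ/2
  have hE1 : |E₀ - 1| ≤ δ / 2 := by
    have hexp : Real.exp (-1 / (10 * h)) ≤ 10 * h := by
      have h10 : 0 < 10 * h := by linarith
      have h1 : 1 / (10 * h) ≤ Real.exp (1 / (10 * h)) := by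
        have := Real.add_one_le_exp (1 / (10 * h)); linarith
      have h2 : Real.exp (-1 / (10 * h)) = (Real.exp (1 / (10 * h)))⁻¹ := by
        rw [← Real.exp_neg]; ring_nf
      rw [h2]
      have h3 : (Real.exp (1 / (10 * h)))⁻¹ ≤ (1 / (10 * h))⁻¹ := by
        apply inv_anti₀ (by positivity) h1
      calc (Real.exp (1 / (10 * h)))⁻¹ ≤ (1 / (10 * h))⁻¹ := h3
        _ = 10 * h := by field_simp
    have habs : |E₀ - 1| ≤ |E₀ - (1 + h)| + |h| := by
      have : E₀ - 1 = (E₀ - (1 + h)) + h := by ring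
      rw [this]; exact abs_add_le _ _
    have : |h| = h := abs_of_pos hh0
    calc |E₀ - 1| ≤ |E₀ - (1 + h)| + h := by rw [this] at habs; exact habs
      _ ≤ 10 * h + h := by linarith [hE.trans hexp]
      _ = 11 * h := by ring
      _ ≤ 11 * (δ / 22) := by linarith
      _ = δ / 2 := by ring
  have hE₀low : 1 - δ / 2 ≤ E₀ := by
    have := (abs_le.mp hE1).1; linarith
  -- lower bound on E₀ - V on S
  have hpS : ∀ y ∈ S, δ ≤ E₀ - V y := by
    intro y hy
    have h1 : V y ≤ m := hx₀max hy
    simp only [hδ_def] at *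
    linarith
  have hIccS : Set.Icc (3.5 : ℝ) (R + 1) ⊆ S := by
    apply Set.Icc_subset_Icc <;> norm_num
  have hpIcc : ∀ t ∈ Set.Icc (3.5 : ℝ) (R + 1), 0 < E₀ - V t :=
    fun t ht => lt_of_lt_of_le hδ (hpS t (hIccS ht))
  have hnb : ∀ t ∈ Set.Icc (3.5 : ℝ) (R + 1), ∀ᶠ y in nhds t, 0 < E₀ - V y := by
    intro t ht
    have hmem : Set.Ioo (3.1 : ℝ) (R + 2) ∈ nhds t :=
      Ioo_mem_nhds (by have := ht.1; norm_num at this ⊢; linarith)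
        (by have := ht.2; linarith)
    filter_upwards [hmem] with y hy
    exact lt_of_lt_of_le hδ (hpS y ⟨hy.1.le, hy.2.le⟩)
  -- the Wronskian vector and its derivative
  set g : ℝ → ℂ × ℂ := fun t => (wrPlus V h E₀ v v' t, wrMinus V h E₀ v v' t) with hg_def
  set G : ℝ → ℂ × ℂ := fun t =>
    ((h : ℂ) * v t * ((a2F V E₀ t : ℝ) : ℂ) * eP V h E₀ t,
     (h : ℂ) * v t * ((a2F V E₀ t : ℝ) : ℂ) * eM V h E₀ t) with hG_def
  have hg : ∀ t ∈ Set.Icc (3.5 : ℝ) (R + 1), HasDerivAt g (G t) t := by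
    intro t ht
    exact (hasDerivAt_wrPlus hVc hd (hd2 t) (hnb t ht) hhne (hv t ht) (hv' t ht)
        (hode t ht)).prodMk
      (hasDerivAt_wrMinus hVc hd (hd2 t) (hnb t ht) hhne (hv t ht) (hv' t ht) (hode t ht))
  -- the pointwise bound ‖G t‖ ≤ K h ‖g t‖
  have hGb : ∀ t ∈ Set.Icc (3.5 : ℝ) (R + 1), ‖G t‖ ≤ K * h * ‖g t‖ := by
    intro t ht
    have hpt : 0 < E₀ - V t := hpIcc t ht
    have htS : t ∈ S := hIccS ht
    -- |v t| ≤ δ^(-1/4) ‖g t‖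
    have haFb : aF V E₀ t ≤ δ ^ (-(1 / 4) : ℝ) :=
      Real.rpow_le_rpow_of_nonpos hδ (hpS t htS) (by norm_num)
    have hWp : ‖wrPlus V h E₀ v v' t‖ ≤ ‖g t‖ := by
      rw [hg_def]; exact le_max_left _ _
    have hWm : ‖wrMinus V h E₀ v v' t‖ ≤ ‖g t‖ := by
      rw [hg_def]; exact le_max_right _ _
    have hgt0 : 0 ≤ ‖g t‖ := norm_nonneg _
    have hvb : ‖v t‖ ≤ δ ^ (-(1 / 4) : ℝ) * ‖g t‖ := by
      have hid := two_I_v (h := h) hVc (hd t) hpt hhne v v'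
      have h2I : ‖(2 * Complex.I) * v t‖ = 2 * ‖v t‖ := by
        rw [norm_mul, norm_mul, Complex.norm_I, Complex.norm_ofNat]; ring
      have hb1 : ‖wrPlus V h E₀ v v' t * wkbMinus V h E₀ t - wrMinus V h E₀ v v' t * wkbPlus V h E₀ t‖ ≤ ‖wrPlus V h E₀ v v' t‖ * ‖wkbMinus V h E₀ t‖ + ‖wrMinus V h E₀ v v' t‖ * ‖wkbPlus V h E₀ t‖ := by
        refine (norm_sub_le _ _).trans ?_
        rw [norm_mul, norm_mul]
      rw [norm_wkbMinus hpt, norm_wkbPlus hpt] at hb1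
      have hb2 : 2 * ‖v t‖ ≤ ‖wrPlus V h E₀ v v' t‖ * aF V E₀ t + ‖wrMinus V h E₀ v v' t‖ * aF V E₀ t := by
        rw [← h2I, hid]; exact hb1
      have haF0 : 0 < aF V E₀ t := aF_pos hpt
      nlinarith [mul_le_mul hWp haFb haF0.le hgt0, mul_le_mul hWm haFb haF0.le hgt0]
    -- |a2F t| ≤ A2
    have ha2b : |a2F V E₀ t| ≤ A2 := by
      have h1 : |deriv V t| ≤ C₁ := by
        have := hC₁ t htS; rwa [Real.norm_eq_abs] at this
      have h2 : |deriv (deriv V) t| ≤ C₂ := by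
        have := hC₂ t htS; rwa [Real.norm_eq_abs] at this
      have hp5 : (E₀ - V t) ^ (-(5 / 4) : ℝ) ≤ δ ^ (-(5 / 4) : ℝ) :=
        Real.rpow_le_rpow_of_nonpos hδ (hpS t htS) (by norm_num)
      have hp9 : (E₀ - V t) ^ (-(9 / 4) : ℝ) ≤ δ ^ (-(9 / 4) : ℝ) :=
        Real.rpow_le_rpow_of_nonpos hδ (hpS t htS) (by norm_num)
      have hp50 : 0 ≤ (E₀ - V t) ^ (-(5 / 4) : ℝ) := Real.rpow_nonneg hpt.le _
      have hp90 : 0 ≤ (E₀ - V t) ^ (-(9 / 4) : ℝ) := Real.rpow_nonneg hpt.le _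
      have hsq1 : deriv V t ^ 2 ≤ C₁ ^ 2 :=
        sq_le_sq' (by linarith [(abs_le.mp h1).1]) (abs_le.mp h1).2
      have hX : |deriv (deriv V) t * (E₀ - V t) ^ (-(5 / 4) : ℝ)| ≤ C₂ * δ ^ (-(5 / 4) : ℝ) := by
        rw [abs_mul, abs_of_nonneg hp50]
        exact mul_le_mul h2 hp5 hp50 hC₂0
      have hY : |deriv V t * (5 / 4 * deriv V t * (E₀ - V t) ^ (-(9 / 4) : ℝ))|
          ≤ 5 / 4 * C₁ ^ 2 * δ ^ (-(9 / 4) : ℝ) := by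
        have he : deriv V t * (5 / 4 * deriv V t * (E₀ - V t) ^ (-(9 / 4) : ℝ))
            = 5 / 4 * deriv V t ^ 2 * (E₀ - V t) ^ (-(9 / 4) : ℝ) := by ring
        rw [he, abs_of_nonneg (by positivity)]
        gcongr
      calc |a2F V E₀ t| ≤ 1 / 4 * (|deriv (deriv V) t * (E₀ - V t) ^ (-(5 / 4) : ℝ)|
            + |deriv V t * (5 / 4 * deriv V t * (E₀ - V t) ^ (-(9 / 4) : ℝ))|) := by
            rw [a2F, abs_mul, abs_of_nonneg (by norm_num : (0:ℝ) ≤ 1 / 4)]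
            have := abs_add_le (deriv (deriv V) t * (E₀ - V t) ^ (-(5 / 4) : ℝ))
              (deriv V t * (5 / 4 * deriv V t * (E₀ - V t) ^ (-(9 / 4) : ℝ)))
            linarith
        _ ≤ A2 := by rw [hA2_def]; linarith
    -- assemble
    have hnormP : ‖(h : ℂ) * v t * ((a2F V E₀ t : ℝ) : ℂ) * eP V h E₀ t‖ ≤ K * h * ‖g t‖ := by
      rw [norm_mul, norm_mul, norm_mul, norm_eP, mul_one, Complex.norm_real,
        Complex.norm_real, Real.norm_eq_abs, Real.norm_eq_abs, abs_of_pos hh0]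
      calc h * ‖v t‖ * |a2F V E₀ t|
          ≤ h * (δ ^ (-(1 / 4) : ℝ) * ‖g t‖) * (A2 + 1) := by
            apply mul_le_mul (mul_le_mul le_rfl hvb (norm_nonneg _) hh0.le)
              (by linarith) (abs_nonneg _) (by positivity)
        _ = K * h * ‖g t‖ := by rw [hK_def]; ring
    have hnormM : ‖(h : ℂ) * v t * ((a2F V E₀ t : ℝ) : ℂ) * eM V h E₀ t‖ ≤ K * h * ‖g t‖ := by
      rw [norm_mul, norm_mul, norm_mul, norm_eM, mul_one, Complex.norm_real,
        Complex.norm_real, Real.norm_eq_abs, Real.norm_eq_abs, abs_of_pos hh0]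
      calc h * ‖v t‖ * |a2F V E₀ t|
          ≤ h * (δ ^ (-(1 / 4) : ℝ) * ‖g t‖) * (A2 + 1) := by
            apply mul_le_mul (mul_le_mul le_rfl hvb (norm_nonneg _) hh0.le)
              (by linarith) (abs_nonneg _) (by positivity)
        _ = K * h * ‖g t‖ := by rw [hK_def]; ring
    rw [hG_def, Prod.norm_def]
    exact max_le hnormP hnormM
  -- Gronwall
  have h35 : (3.5 : ℝ) ∈ Set.Icc (3.5 : ℝ) (R + 1) := ⟨le_refl _, by linarith⟩
  set g0 : ℂ × ℂ := g 3.5 with hg0_def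
  set f : ℝ → ℂ × ℂ := fun t => g t - g0 with hf_def
  have hfderiv : ∀ t ∈ Set.Icc (3.5 : ℝ) (R + 1), HasDerivAt f (G t) t :=
    fun t ht => (hg t ht).sub_const g0
  have hfc : ContinuousOn f (Set.Icc (3.5 : ℝ) (R + 1)) :=
    fun t ht => (hfderiv t ht).continuousAt.continuousWithinAt
  have hKh : (0 : ℝ) < K * h := by positivity
  have hbound : ∀ t ∈ Set.Ico (3.5 : ℝ) (R + 1),
      ‖G t‖ ≤ K * h * ‖f t‖ + K * h * ‖g0‖ := by
    intro t ht
    have ht' : t ∈ Set.Icc (3.5 : ℝ) (R + 1) := ⟨ht.1, ht.2.le⟩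
    have h1 : ‖g t‖ ≤ ‖f t‖ + ‖g0‖ := by
      have : g t = f t + g0 := by rw [hf_def]; ring_nf
      rw [this]; exact norm_add_le _ _
    have h2 := hGb t ht'
    nlinarith [norm_nonneg (f t), norm_nonneg g0]
  have hgron := norm_le_gronwallBound_of_norm_deriv_right_le hfc
    (fun t ht => (hfderiv t ⟨ht.1, ht.2.le⟩).hasDerivWithinAt)
    (show ‖f 3.5‖ ≤ 0 by rw [hf_def]; simp [hg0_def]) hbound x hx
  have hgron2 : ‖f x‖ ≤ ‖g0‖ * (Real.exp (K * h * (x - 3.5)) - 1) := by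
    refine hgron.trans (le_of_eq ?_)
    rw [gronwallBound_of_K_ne_0 hKh.ne']
    field_simp
    ring
  -- estimate exp s - 1 ≤ s exp s ≤ K h L exp (K L)
  set s : ℝ := K * h * (x - 3.5) with hs_def
  have hx1 := hx.1
  have hx2 := hx.2
  have hs0 : 0 ≤ s := by rw [hs_def]; nlinarith
  have hsL : s ≤ K * L := by
    rw [hs_def, hL_def]
    nlinarith
  have hexp1 : Real.exp s - 1 ≤ s * Real.exp s := by
    have hinv : Real.exp (-s) * Real.exp s = 1 := by
      rw [← Real.exp_add]; simp
    have hle : 1 - s ≤ Real.exp (-s) := by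
      have := Real.add_one_le_exp (-s); linarith
    nlinarith [mul_le_mul_of_nonneg_right hle (Real.exp_pos s).le]
  have hexp2 : s * Real.exp s ≤ K * h * L * Real.exp (K * L) := by
    have hm1 : Real.exp s ≤ Real.exp (K * L) := Real.exp_le_exp.mpr hsL
    have hsKhL : s ≤ K * h * L := by rw [hs_def, hL_def]; nlinarith
    nlinarith [Real.exp_pos s, Real.exp_pos (K * L), mul_le_mul hsKhL hm1 (Real.exp_pos s).le (by nlinarith)]
  have hfinal : ‖f x‖ ≤ K * L * Real.exp (K * L) * h * ‖g0‖ := by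
    have hg00 : 0 ≤ ‖g0‖ := norm_nonneg _
    calc ‖f x‖ ≤ ‖g0‖ * (Real.exp s - 1) := hgron2
      _ ≤ ‖g0‖ * (K * h * L * Real.exp (K * L)) := by
          apply mul_le_mul_of_nonneg_left _ hg00
          linarith
      _ = K * L * Real.exp (K * L) * h * ‖g0‖ := by ring
  -- convert to the sqrt statement
  have hfxP : ‖wrPlus V h E₀ v v' x - wrPlus V h E₀ v v' 3.5‖ ≤ ‖f x‖ := by
    rw [hf_def, hg0_def, hg_def]
    exact le_max_left _ _
  have hfxM : ‖wrMinus V h E₀ v v' x - wrMinus V h E₀ v v' 3.5‖ ≤ ‖f x‖ := by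
    rw [hf_def, hg0_def, hg_def]
    exact le_max_right _ _
  have hLHS : Real.sqrt (‖wrPlus V h E₀ v v' x - wrPlus V h E₀ v v' 3.5‖ ^ 2
      + ‖wrMinus V h E₀ v v' x - wrMinus V h E₀ v v' 3.5‖ ^ 2)
      ≤ Real.sqrt 2 * ‖f x‖ := by
    have h1 : ‖wrPlus V h E₀ v v' x - wrPlus V h E₀ v v' 3.5‖ ^ 2
        + ‖wrMinus V h E₀ v v' x - wrMinus V h E₀ v v' 3.5‖ ^ 2 ≤ 2 * ‖f x‖ ^ 2 := by
      nlinarith [norm_nonneg (wrPlus V h E₀ v v' x - wrPlus V h E₀ v v' 3.5),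
        norm_nonneg (wrMinus V h E₀ v v' x - wrMinus V h E₀ v v' 3.5), norm_nonneg (f x)]
    calc Real.sqrt (‖wrPlus V h E₀ v v' x - wrPlus V h E₀ v v' 3.5‖ ^ 2
          + ‖wrMinus V h E₀ v v' x - wrMinus V h E₀ v v' 3.5‖ ^ 2)
        ≤ Real.sqrt (2 * ‖f x‖ ^ 2) := Real.sqrt_le_sqrt h1
      _ = Real.sqrt 2 * ‖f x‖ := by
          rw [Real.sqrt_mul (by norm_num : (0:ℝ) ≤ 2), Real.sqrt_sq (norm_nonneg _)]
  have hg0b : ‖g0‖ ≤ Real.sqrt (‖wrPlus V h E₀ v v' 3.5‖ ^ 2 + ‖wrMinus V h E₀ v v' 3.5‖ ^ 2) := by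
    rw [hg0_def, hg_def, Prod.norm_def]
    apply max_le
    · exact Real.le_sqrt_of_sq_le (by nlinarith [sq_nonneg (‖wrMinus V h E₀ v v' 3.5‖)])
    · exact Real.le_sqrt_of_sq_le (by nlinarith [sq_nonneg (‖wrPlus V h E₀ v v' 3.5‖)])
  calc Real.sqrt (‖wrPlus V h E₀ v v' x - wrPlus V h E₀ v v' 3.5‖ ^ 2
        + ‖wrMinus V h E₀ v v' x - wrMinus V h E₀ v v' 3.5‖ ^ 2)
      ≤ Real.sqrt 2 * ‖f x‖ := hLHS
    _ ≤ Real.sqrt 2 * (K * L * Real.exp (K * L) * h * ‖g0‖) := by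
        apply mul_le_mul_of_nonneg_left hfinal (Real.sqrt_nonneg 2)
    _ ≤ Real.sqrt 2 * (K * L * Real.exp (K * L) * h
          * Real.sqrt (‖wrPlus V h E₀ v v' 3.5‖ ^ 2 + ‖wrMinus V h E₀ v v' 3.5‖ ^ 2)) := by
        apply mul_le_mul_of_nonneg_left _ (Real.sqrt_nonneg 2)
        apply mul_le_mul_of_nonneg_left hg0b
        positivity
    _ = Real.sqrt 2 * (K * L * Real.exp (K * L)) * h
          * Real.sqrt (‖wrPlus V h E₀ v v' 3.5‖ ^ 2 + ‖wrMinus V h E₀ v v' 3.5‖ ^ 2) := by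
        ring
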